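/- In the frequency-domain model of an LCMT, let j, k be nodes with par k = j (k is a child of j), and let i be a node with i ≠ j, i ≠ k, such that i is not a descendant of k. Then C(X i ω, X k ω) ≤ C(X j ω, X k ω) for every ω ∈ ℝ. If, in addition, h m ω ≠ 0 for every node m ≠ r and every ω, then the inequality is strict for every ω; consequently, if the relevant coherence functions are measurable, d(j, k) < d(i, k). -/

import Mathlib

open scoped InnerProductSpace

/-- The coherence of two vectors of a complex inner product space
(inner product conjugate-linear in the first argument):
`C(u, v) = ‖⟪u, v⟫‖² / (‖u‖² · ‖v‖²)`. -/
noncomputable def coherence {H : Type*} [NormedAddCommGroup H]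
    [InnerProductSpace ℂ H] (u v : H) : ℝ :=
  ‖⟪u, v⟫_ℂ‖ ^ 2 / (‖u‖ ^ 2 * ‖v‖ ^ 2)

/-- The coherence-based distance between two frequency-indexed families of
vectors: `d(f, g) = ( (1/(2π)) ∫_{-π}^{π} (1 − C(f ω, g ω)) dω )^{1/2}`. -/
noncomputable def cohDist {H : Type*} [NormedAddCommGroup H]
    [InnerProductSpace ℂ H] (f g : ℝ → H) : ℝ :=
  Real.sqrt ((1 / (2 * Real.pi)) *
    ∫ ω in (-Real.pi)..Real.pi, (1 - coherence (f ω) (g ω)))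

/-- In a tree, iterating `par` never cycles except at the root. -/
lemma lcmt_cycle_root {V : Type*} {par : V → V} {r : V} (hroot : par r = r)
    (hreach : ∀ j, ∃ n, par^[n] j = r) {m : V} {l : ℕ} (hl : 1 ≤ l)
    (hcyc : par^[l] m = m) : m = r := by
  obtain ⟨n, hn⟩ := hreach m
  have h1 : par^[l * n] m = m := by
    rw [Function.iterate_mul]; exact Function.iterate_fixed hcyc n
  have h2 : n ≤ l * n := Nat.le_mul_of_pos_left n hl
  have h3 : par^[l * n] m = r := by
    rw [← Nat.sub_add_cancel h2, Function.iterate_add_apply, hn,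
      Function.iterate_fixed hroot]
  rw [← h1, h3]

/-- If `a` is neither `m` nor a strict ancestor of `m`, then `ρ a ⊥ X m`. -/
lemma lcmt_inner_rho_X {H : Type*} [NormedAddCommGroup H] [InnerProductSpace ℂ H]
    {V : Type*} {r : V} {par : V → V}
    (h : V → ℝ → ℂ) (ρ : V → ℝ → H)
    (horth : ∀ (ω : ℝ) (a b : V), a ≠ b → ⟪ρ a ω, ρ b ω⟫_ℂ = 0)
    (X : V → ℝ → H)
    (hXr : ∀ ω, X r ω = ρ r ω)
    (hX : ∀ j, j ≠ r → ∀ ω, X j ω = h j ω • X (par j) ω + ρ j ω) :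
    ∀ (n : ℕ) (m : V), par^[n] m = r → ∀ a : V, a ≠ m →
      (¬ ∃ l, 1 ≤ l ∧ par^[l] m = a) → ∀ ω, ⟪ρ a ω, X m ω⟫_ℂ = 0 := by
  intro n
  induction n with
  | zero =>
    intro m hm a ha _ ω
    simp only [Function.iterate_zero_apply] at hm
    subst hm
    rw [hXr]
    exact horth ω a m ha
  | succ n ih =>
    intro m hm a ha hnl ω
    by_cases hmr : m = r
    · subst hmr; rw [hXr]; exact horth ω a m ha
    · rw [hX m hmr ω, inner_add_right, inner_smul_right]
      have h1 : ⟪ρ a ω, X (par m) ω⟫_ℂ = 0 := by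
        refine ih (par m) (by rwa [← Function.iterate_succ_apply]) a ?_ ?_ ω
        · intro hap
          exact hnl ⟨1, le_refl 1, by simp [← hap]⟩
        · rintro ⟨l, hl1, hl⟩
          exact hnl ⟨l + 1, by omega, by rw [Function.iterate_succ_apply]; exact hl⟩
      rw [h1, horth ω a m ha]; ring

/-- Lemma 3 of the paper, the 'nephews' lemma: if `k` is a child
of `j` and `i` is a node different from `j` and `k` which is not a descendant
of `k`, then the coherence of `X k` with its parent `X j` is at least that with
`X i`; under the nondegeneracy assumption that no transfer function vanishes,
the inequality is strict at every frequency, and consequently (given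
measurability of the coherence functions) `d(j, k) < d(i, k)`. -/
theorem lcmt_nephews_lemma
    {H : Type*} [NormedAddCommGroup H] [InnerProductSpace ℂ H]
    {V : Type*} [Fintype V]
    (r : V) (par : V → V)
    (hroot : par r = r)
    (hpar : ∀ j, j ≠ r → par j ≠ j)
    (hreach : ∀ j, ∃ n, par^[n] j = r)
    (h : V → ℝ → ℂ) (ρ : V → ℝ → H)
    (horth : ∀ (ω : ℝ) (a b : V), a ≠ b → ⟪ρ a ω, ρ b ω⟫_ℂ = 0)
    (hwp : ∀ (j : V) (ω : ℝ), ρ j ω ≠ 0)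
    (X : V → ℝ → H)
    (hXr : ∀ ω, X r ω = ρ r ω)
    (hX : ∀ j, j ≠ r → ∀ ω, X j ω = h j ω • X (par j) ω + ρ j ω)
    (i j k : V)
    (hjk : par k = j)
    (hik : i ≠ k) (hijne : i ≠ j)
    (hnotdesc : ¬ ∃ n, 1 ≤ n ∧ par^[n] i = k) :
    (∀ ω : ℝ, coherence (X i ω) (X k ω) ≤ coherence (X j ω) (X k ω)) ∧
    ((∀ (m : V) (ω : ℝ), m ≠ r → h m ω ≠ 0) →
      (∀ ω : ℝ, coherence (X i ω) (X k ω) < coherence (X j ω) (X k ω)) ∧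
      ((Measurable fun ω => coherence (X j ω) (X k ω)) →
       (Measurable fun ω => coherence (X i ω) (X k ω)) →
        cohDist (X j) (X k) < cohDist (X i) (X k))) := by
  have key : ∀ (m a : V), a ≠ m → (¬ ∃ l, 1 ≤ l ∧ par^[l] m = a) →
      ∀ ω, ⟪ρ a ω, X m ω⟫_ℂ = 0 := by
    intro m a ha hnl ω
    obtain ⟨n, hn⟩ := hreach m
    exact lcmt_inner_rho_X h ρ horth X hXr hX n m hn a ha hnl ω
  have nocycle : ∀ (m : V) (l : ℕ), 1 ≤ l → par^[l] m = m → m = r :=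
    fun m l hl hc => lcmt_cycle_root hroot hreach hl hc
  have keyself : ∀ (m : V) (ω : ℝ), ⟪ρ m ω, X m ω⟫_ℂ = (‖ρ m ω‖ : ℂ) ^ 2 := by
    intro m ω
    by_cases hmr : m = r
    · subst hmr; rw [hXr]; exact inner_self_eq_norm_sq_to_K (ρ m ω)
    · rw [hX m hmr ω, inner_add_right, inner_smul_right]
      have h1 : ⟪ρ m ω, X (par m) ω⟫_ℂ = 0 := by
        refine key (par m) m (Ne.symm (hpar m hmr)) ?_ ω
        rintro ⟨l, hl1, hl⟩
        exact hmr (nocycle m (l + 1) (by omega)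
          (by rw [Function.iterate_succ_apply]; exact hl))
      rw [h1, mul_zero, zero_add, inner_self_eq_norm_sq_to_K]
      norm_cast
  have Xne : ∀ (m : V) (ω : ℝ), X m ω ≠ 0 := by
    intro m ω hm
    have h0 := keyself m ω
    rw [hm, inner_zero_right] at h0
    have h2 : (‖ρ m ω‖ : ℂ) = 0 := pow_eq_zero_iff (n := 2) (by norm_num) |>.mp h0.symm
    exact hwp m ω (by simpa using h2)
  have hkr : k ≠ r := by
    intro hk
    obtain ⟨n, hn⟩ := hreach i
    refine hnotdesc ⟨n, ?_, by rw [hn, hk]⟩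
    rcases Nat.eq_zero_or_pos n with h0 | h0
    · rw [h0] at hn; simp at hn; exact absurd (hn.trans hk.symm) hik
    · exact h0
  have hkj : k ≠ j := fun hkj' => hpar k hkr (hjk.trans hkj'.symm)
  have hkXj : ∀ ω, ⟪ρ k ω, X j ω⟫_ℂ = 0 := by
    intro ω
    refine key j k hkj ?_ ω
    rintro ⟨l, hl1, hl⟩
    refine hkr (nocycle k (l + 1) (by omega) ?_)
    rw [Function.iterate_succ_apply, hjk]; exact hl
  have hkXi : ∀ ω, ⟪ρ k ω, X i ω⟫_ℂ = 0 := fun ω => key i k (Ne.symm hik) hnotdesc ω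
  have hXk : ∀ ω, X k ω = h k ω • X j ω + ρ k ω := by
    intro ω; rw [hX k hkr ω, hjk]
  have hWnorm : ∀ ω, ‖X k ω‖ ^ 2 = ‖h k ω‖ ^ 2 * ‖X j ω‖ ^ 2 + ‖ρ k ω‖ ^ 2 := by
    intro ω
    rw [hXk ω]
    have hp := norm_add_sq_eq_norm_sq_add_norm_sq_of_inner_eq_zero
      (h k ω • X j ω) (ρ k ω)
      (by rw [inner_smul_left, inner_eq_zero_symm.mpr (hkXj ω), mul_zero])
    have hs : ‖h k ω • X j ω‖ = ‖h k ω‖ * ‖X j ω‖ := norm_smul _ _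
    rw [pow_two, hp, hs]; ring
  have hinnerj : ∀ ω, ⟪X j ω, X k ω⟫_ℂ = h k ω * (‖X j ω‖ : ℂ) ^ 2 := by
    intro ω
    rw [hXk ω, inner_add_right, inner_smul_right, inner_self_eq_norm_sq_to_K,
      inner_eq_zero_symm.mpr (hkXj ω), add_zero]
    norm_cast
  have hinneri : ∀ ω, ⟪X i ω, X k ω⟫_ℂ = h k ω * ⟪X i ω, X j ω⟫_ℂ := by
    intro ω
    rw [hXk ω, inner_add_right, inner_smul_right,
      inner_eq_zero_symm.mpr (hkXi ω), add_zero]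
  have cohj : ∀ ω, coherence (X j ω) (X k ω) =
      ‖h k ω‖ ^ 2 * (‖X j ω‖ ^ 2) ^ 2 / (‖X j ω‖ ^ 2 * ‖X k ω‖ ^ 2) := by
    intro ω
    rw [coherence, hinnerj ω, norm_mul, norm_pow, Complex.norm_real, norm_norm, mul_pow]
  have cohi : ∀ ω, coherence (X i ω) (X k ω) =
      ‖h k ω‖ ^ 2 * ‖⟪X i ω, X j ω⟫_ℂ‖ ^ 2 / (‖X i ω‖ ^ 2 * ‖X k ω‖ ^ 2) := by
    intro ω
    rw [coherence, hinneri ω, norm_mul, mul_pow]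
  have hjpos : ∀ ω, (0:ℝ) < ‖X j ω‖ ^ 2 :=
    fun ω => pow_pos (norm_pos_iff.mpr (Xne j ω)) 2
  have hipos : ∀ ω, (0:ℝ) < ‖X i ω‖ ^ 2 :=
    fun ω => pow_pos (norm_pos_iff.mpr (Xne i ω)) 2
  have hkpos : ∀ ω, (0:ℝ) < ‖X k ω‖ ^ 2 :=
    fun ω => pow_pos (norm_pos_iff.mpr (Xne k ω)) 2
  have CS : ∀ ω, ‖⟪X i ω, X j ω⟫_ℂ‖ ≤ ‖X i ω‖ * ‖X j ω‖ :=
    fun ω => norm_inner_le_norm _ _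
  have CS2 : ∀ ω, ‖⟪X i ω, X j ω⟫_ℂ‖ ^ 2 ≤ ‖X i ω‖ ^ 2 * ‖X j ω‖ ^ 2 := by
    intro ω
    calc ‖⟪X i ω, X j ω⟫_ℂ‖ ^ 2 ≤ (‖X i ω‖ * ‖X j ω‖) ^ 2 :=
          pow_le_pow_left₀ (norm_nonneg _) (CS ω) 2
      _ = ‖X i ω‖ ^ 2 * ‖X j ω‖ ^ 2 := by ring
  have weak : ∀ ω : ℝ, coherence (X i ω) (X k ω) ≤ coherence (X j ω) (X k ω) := by
    intro ω
    rw [cohi ω, cohj ω,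
      div_le_div_iff₀ (mul_pos (hipos ω) (hkpos ω)) (mul_pos (hjpos ω) (hkpos ω))]
    have hmul := mul_le_mul_of_nonneg_left (CS2 ω)
      (show (0:ℝ) ≤ ‖h k ω‖ ^ 2 * ‖X k ω‖ ^ 2 * ‖X j ω‖ ^ 2 by positivity)
    nlinarith [hmul]
  refine ⟨weak, fun hnd => ?_⟩
  have hcpos : ∀ ω, (0:ℝ) < ‖h k ω‖ ^ 2 :=
    fun ω => pow_pos (norm_pos_iff.mpr (hnd k ω hkr)) 2
  -- strict Cauchy–Schwarz: X i and X j are never collinear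
  have hPlt : ∀ ω, ‖⟪X i ω, X j ω⟫_ℂ‖ < ‖X i ω‖ * ‖X j ω‖ := by
    intro ω
    rcases lt_or_eq_of_le (CS ω) with hlt | heq
    · exact hlt
    exfalso
    obtain ⟨c, hc0, hcu⟩ := (norm_inner_eq_norm_iff (Xne i ω) (Xne j ω)).mp heq
    by_cases hanc : ∃ l, 1 ≤ l ∧ par^[l] i = j
    · obtain ⟨l, hl1, hl⟩ := hanc
      have hnoanc : ¬ ∃ l', 1 ≤ l' ∧ par^[l'] j = i := by
        rintro ⟨l', hl'1, hl'⟩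
        have hcyc : par^[l' + l] i = i := by
          rw [Function.iterate_add_apply, hl]; exact hl'
        have hir : i = r := nocycle i (l' + l) (by omega) hcyc
        subst hir
        exact hijne (by rw [← hl, Function.iterate_fixed hroot])
      have h0 : ⟪ρ i ω, X j ω⟫_ℂ = 0 := key j i hijne hnoanc ω
      rw [hcu, inner_smul_right, keyself i ω] at h0
      rcases mul_eq_zero.mp h0 with hc | hn
      · exact hc0 hc
      · exact hwp i ω (by simpa using pow_eq_zero_iff (n := 2) (by norm_num) |>.mp hn)
    · have h0 : ⟪ρ j ω, X i ω⟫_ℂ = 0 := key i j (Ne.symm hijne) hanc ω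
      have h1 : ⟪ρ j ω, X j ω⟫_ℂ = 0 := by
        rw [hcu, inner_smul_right, h0, mul_zero]
      rw [keyself j ω] at h1
      exact hwp j ω (by simpa using pow_eq_zero_iff (n := 2) (by norm_num) |>.mp h1)
  have strict : ∀ ω : ℝ, coherence (X i ω) (X k ω) < coherence (X j ω) (X k ω) := by
    intro ω
    rw [cohi ω, cohj ω,
      div_lt_div_iff₀ (mul_pos (hipos ω) (hkpos ω)) (mul_pos (hjpos ω) (hkpos ω))]
    have hP2 : ‖⟪X i ω, X j ω⟫_ℂ‖ ^ 2 < ‖X i ω‖ ^ 2 * ‖X j ω‖ ^ 2 := by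
      calc ‖⟪X i ω, X j ω⟫_ℂ‖ ^ 2 < (‖X i ω‖ * ‖X j ω‖) ^ 2 :=
            pow_lt_pow_left₀ (hPlt ω) (norm_nonneg _) (by norm_num)
        _ = ‖X i ω‖ ^ 2 * ‖X j ω‖ ^ 2 := by ring
    have hmul := mul_lt_mul_of_pos_left hP2
      (mul_pos (mul_pos (hcpos ω) (hkpos ω)) (hjpos ω))
    nlinarith [hmul]
  refine ⟨strict, fun hmj hmi => ?_⟩
  -- bounds on the coherences
  have hcoh_nonneg : ∀ (u v : H), 0 ≤ coherence u v := by
    intro u v; unfold coherence; positivity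
  have hcohj_le : ∀ ω, coherence (X j ω) (X k ω) ≤ 1 := by
    intro ω
    unfold coherence
    rw [div_le_one (mul_pos (hjpos ω) (hkpos ω))]
    calc ‖⟪X j ω, X k ω⟫_ℂ‖ ^ 2 ≤ (‖X j ω‖ * ‖X k ω‖) ^ 2 :=
          pow_le_pow_left₀ (norm_nonneg _) (norm_inner_le_norm _ _) 2
      _ = ‖X j ω‖ ^ 2 * ‖X k ω‖ ^ 2 := by ring
  have hcohi_le : ∀ ω, coherence (X i ω) (X k ω) ≤ 1 :=
    fun ω => (weak ω).trans (hcohj_le ω)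
  have pi_pos := Real.pi_pos
  -- integrability
  have hint : ∀ (c : ℝ → ℝ), Measurable c → (∀ ω, 0 ≤ c ω) → (∀ ω, c ω ≤ 1) →
      IntervalIntegrable (fun ω => 1 - c ω) MeasureTheory.volume
        (-Real.pi) Real.pi := by
    intro c hm h0 h1
    rw [intervalIntegrable_iff]
    apply MeasureTheory.Measure.integrableOn_of_bounded (M := 1)
    · rw [Set.uIoc, Real.volume_Ioc]; exact ENNReal.ofReal_ne_top
    · exact (measurable_const.sub hm).aestronglyMeasurable
    · refine MeasureTheory.ae_of_all _ fun x => ?_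
      rw [Real.norm_eq_abs, abs_le]
      constructor
      · linarith [h1 x]
      · linarith [h0 x]
  have hgj := hint _ hmj (fun ω => hcoh_nonneg _ _) hcohj_le
  have hgi := hint _ hmi (fun ω => hcoh_nonneg _ _) hcohi_le
  have hdiff : 0 < ∫ ω in (-Real.pi)..Real.pi,
      ((1 - coherence (X i ω) (X k ω)) - (1 - coherence (X j ω) (X k ω))) := by
    refine intervalIntegral.intervalIntegral_pos_of_pos_on (hgi.sub hgj)
      (fun x _ => ?_) (by linarith)
    try dsimp only
    linarith [strict x]
  rw [intervalIntegral.integral_sub hgi hgj] at hdiff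
  unfold cohDist
  apply Real.sqrt_lt_sqrt
  · apply mul_nonneg (by positivity)
    apply intervalIntegral.integral_nonneg (by linarith)
    intro x _
    linarith [hcohj_le x]
  · apply mul_lt_mul_of_pos_left _ (by positivity)
    linarith
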